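/- For N ∈ 𝒩, the map φ_N : F(Δ(Σ(N))) → F(𝒩_N) sending a chain ω in Σ(N) to F^k(ω) = ⋃_{x∈ω} max G_{≤x} is the carrier map of the subdivision of the simplex 𝒩_N by the order complex Δ(Σ(N)); equivalently, ⋁_{x∈ω} F^k(x) = ⋃_{x∈ω} F^k(x) for every chain ω. -/

import Mathlib

open Classical Set
noncomputable section

/-- The partition of `Fin m` whose only (possibly) non-singleton block is `B`. -/
def blockSetoid {m : ℕ} (B : Set (Fin m)) : Setoid (Fin m) :=
  ⟨fun x y => x = y ∨ (x ∈ B ∧ y ∈ B), by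
    refine ⟨fun x => Or.inl rfl, ?_, ?_⟩
    · rintro x y (h | h)
      · exact Or.inl h.symm
      · exact Or.inr ⟨h.2, h.1⟩
    · rintro x y z (h1 | h1) (h2 | h2)
      · exact Or.inl (h1.trans h2)
      · subst h1; exact Or.inr h2
      · subst h2; exact Or.inr h1
      · exact Or.inr ⟨h1.1, h2.2⟩⟩

/-- `Π^(k)_m`: partitions of `{1,…,m}` all of whose blocks have size ≡ 1 (mod k). -/
def Pik (k m : ℕ) : Set (Setoid (Fin m)) :=
  {s | ∀ c ∈ s.classes, c.ncard ≡ 1 [MOD k]}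

/-- `I`: partitions with exactly one non-singleton block (the minimal building set of `Π_m`). -/
def BSI (m : ℕ) : Set (Setoid (Fin m)) :=
  {s | ∃ B : Set (Fin m), 2 ≤ B.ncard ∧ s = blockSetoid B}

/-- `G`: partitions with exactly one non-singleton block, of size ≡ 1 (mod k). -/
def BSG (k m : ℕ) : Set (Setoid (Fin m)) :=
  {s | ∃ B : Set (Fin m), 2 ≤ B.ncard ∧ B.ncard ≡ 1 [MOD k] ∧ s = blockSetoid B}

/-- `z` is a minimal upper bound of the set `A` within the subposet `P`. -/
def IsMinUB {L : Type*} [PartialOrder L] (P : Set L) (A : Set L) (z : L) : Prop :=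
  z ∈ P ∧ (∀ a ∈ A, a ≤ z) ∧ ∀ w ∈ P, (∀ a ∈ A, a ≤ w) → w ≤ z → w = z

/-- Maximal elements of `S` lying below `x`. -/
def maxBelow {L : Type*} [PartialOrder L] (S : Set L) (x : L) : Set L :=
  {g ∈ S | g ≤ x ∧ ∀ g' ∈ S, g' ≤ x → g ≤ g' → g = g'}

/-- The support of a partition: union of its non-singleton blocks. -/
def suppPart {m : ℕ} (s : Setoid (Fin m)) : Set (Fin m) :=
  {x | ∃ y, x ≠ y ∧ s x y}

/-- Membership in the family of faces of the complex of k-trees: `N ⊆ G` and every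
antichain in `N` of size at least two has a unique minimal upper bound in `Pik k m`,
which moreover does not lie in `G`. -/
def memN (k m : ℕ) (N : Set (Setoid (Fin m))) : Prop :=
  N ⊆ BSG k m ∧ ∀ S : Finset (Setoid (Fin m)), ↑S ⊆ N → 2 ≤ S.card →
    (∀ a ∈ S, ∀ b ∈ S, a ≠ b → ¬ a ≤ b) →
    (∃! z, IsMinUB (Pik k m) ↑S z) ∧
      ∀ z, IsMinUB (Pik k m) ↑S z → z ∉ BSG k m

/-- `Σ(N)`: the set of all (unique minimal-upper-bound) joins of subsets of `N` inside
`Pik k m`; the empty join yields the minimal element. -/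
def SigmaSet (k m : ℕ) (N : Set (Setoid (Fin m))) : Set (Setoid (Fin m)) :=
  {a | ∃ X ⊆ N, IsMinUB (Pik k m) X a}

/-- The geometric realization carried by a family `F` of (finite) vertex sets: points are
the nonnegative finitely-supported weightings summing to `1` whose support lies in `F`. -/
def geomF {V : Type*} (F : Set (Set V)) : Set (V → ℝ) :=
  {w | (∀ v, 0 ≤ w v) ∧ (Function.support w).Finite ∧ ∑ᶠ v, w v = 1 ∧
        Function.support w ∈ F}

/-- `F` is (the face family of) an abstract simplicial complex: faces are nonempty finite
sets, closed under passing to nonempty subsets. -/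
def IsComplexF {V : Type*} (F : Set (Set V)) : Prop :=
  ∀ s ∈ F, s.Nonempty ∧ s.Finite ∧ ∀ t ⊆ s, t.Nonempty → t ∈ F

/-- The closed cell of a simplex `s`: all points supported on a nonempty subset of `s`. -/
def closedCell {V : Type*} (s : Set V) : Set (V → ℝ) :=
  geomF {t | t ⊆ s ∧ t.Nonempty}

/-- The open cell of a simplex `s`: all points supported on exactly `s`. -/
def openCell {V : Type*} (s : Set V) : Set (V → ℝ) :=
  geomF {s}

/-- The linear extension of a vertex map `f0 : V → |Q|` to the realization. -/
def linExt {V W : Type*} (f0 : V → W → ℝ) (w : V → ℝ) : W → ℝ :=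
  fun u => ∑ᶠ v, w v * f0 v u

/-- `P` is a subdivision of `Q` with carrier map `φ` and vertex map `f0`: `φ` is a poset
map of face posets, each vertex of a face `p` is sent into the closed cell of `φ p`, and
the linear extension of `f0` restricts to a homeomorphism of realizations. -/
def IsSubdivOn {V W : Type*} (P : Set (Set V)) (Q : Set (Set W))
    (φ : Set V → Set W) (f0 : V → W → ℝ) : Prop :=
  (∀ p ∈ P, φ p ∈ Q) ∧
  (∀ p ∈ P, ∀ p' ∈ P, p' ⊆ p → φ p' ⊆ φ p) ∧
  (∀ p ∈ P, ∀ v ∈ p, f0 v ∈ closedCell (φ p)) ∧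
  ∃ h : (geomF P) ≃ₜ (geomF Q), ∀ w : geomF P, (h w : W → ℝ) = linExt f0 (w : V → ℝ)


/-! ### Auxiliary development -/

instance finiteSetoid {α : Type*} [Finite α] : Finite (Setoid α) :=
  Finite.of_injective (fun s : Setoid α => s.r) fun _ _ h => Setoid.ext fun x y =>
    iff_of_eq (congrFun (congrFun h x) y)

section Aux

variable {k m : ℕ}

lemma blockSetoid_apply {B : Set (Fin m)} {x y : Fin m} :
    blockSetoid B x y ↔ x = y ∨ (x ∈ B ∧ y ∈ B) := Iff.rfl

lemma exists_pair_of_two_le {B : Set (Fin m)} (h2 : 2 ≤ B.ncard) (x : Fin m) :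
    x ∈ B → ∃ y ∈ B, y ≠ x := fun _ => Set.exists_ne_of_one_lt_ncard (by omega) x

lemma nonempty_of_two_le {B : Set (Fin m)} (h2 : 2 ≤ B.ncard) : B.Nonempty := by
  rw [← Set.ncard_pos (Set.toFinite B)]; omega

lemma suppPart_blockSetoid {B : Set (Fin m)} (h2 : 2 ≤ B.ncard) :
    suppPart (blockSetoid B) = B := by
  ext x
  constructor
  · rintro ⟨y, hxy, (rfl | ⟨h1, _⟩)⟩
    · exact absurd rfl hxy
    · exact h1
  · intro hx
    obtain ⟨y, hyB, hyx⟩ := exists_pair_of_two_le h2 x hx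
    exact ⟨y, fun h => hyx h.symm, Or.inr ⟨hx, hyB⟩⟩

lemma block_eq_of_setoid_eq {B C : Set (Fin m)} (h : blockSetoid B = blockSetoid C)
    (h2 : 2 ≤ C.ncard) : B = C := by
  have h2B : 2 ≤ B.ncard := by
    by_contra hlt
    obtain ⟨a, haC, b, hbC, hab⟩ := (Set.one_lt_ncard (Set.toFinite C)).mp (by omega)
    have : blockSetoid B a b := h ▸ (Or.inr ⟨haC, hbC⟩ : blockSetoid C a b)
    rcases this with rfl | ⟨haB, hbB⟩
    · exact hab rfl
    · exact hlt ((Set.one_lt_ncard (Set.toFinite B)).mpr ⟨a, haB, b, hbB, hab⟩)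
  rw [← suppPart_blockSetoid h2B, h, suppPart_blockSetoid h2]

lemma blockSetoid_le_iff {B : Set (Fin m)} {s : Setoid (Fin m)} :
    blockSetoid B ≤ s ↔ ∀ x ∈ B, ∀ y ∈ B, s x y := by
  constructor
  · intro h x hx y hy
    exact Setoid.le_def.mp h (Or.inr ⟨hx, hy⟩)
  · intro h
    rw [Setoid.le_def]
    rintro x y (rfl | ⟨h1, h2⟩)
    · exact s.refl x
    · exact h _ h1 _ h2

lemma blockSetoid_le_blockSetoid {B C : Set (Fin m)} (h2 : 2 ≤ B.ncard) :
    blockSetoid B ≤ blockSetoid C ↔ B ⊆ C := by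
  constructor
  · intro h x hx
    obtain ⟨y, hyB, hyx⟩ := exists_pair_of_two_le h2 x hx
    rcases blockSetoid_le_iff.mp h x hx y hyB with rfl | ⟨h1, _⟩
    · exact absurd rfl hyx
    · exact h1
  · intro h
    exact blockSetoid_le_iff.mpr fun x hx y hy => Or.inr ⟨h hx, h hy⟩

lemma blockSetoid_mem_Pik {B : Set (Fin m)} (h1 : B.ncard ≡ 1 [MOD k]) :
    blockSetoid B ∈ Pik k m := by
  intro c hc
  obtain ⟨y, rfl⟩ := hc
  by_cases hy : y ∈ B
  · have : {x | blockSetoid B x y} = B := by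
      ext x
      constructor
      · rintro (rfl | ⟨h1, _⟩)
        · exact hy
        · exact h1
      · intro hx; exact Or.inr ⟨hx, hy⟩
    rw [this]; exact h1
  · have : {x | blockSetoid B x y} = {y} := by
      ext x
      constructor
      · rintro (rfl | ⟨_, h2⟩)
        · rfl
        · exact absurd h2 hy
      · rintro rfl; exact Or.inl rfl
    rw [this, Set.ncard_singleton]

/-- Join of a family of blocks. -/
def multi (𝔄 : Set (Set (Fin m))) : Setoid (Fin m) :=
  sSup (blockSetoid '' 𝔄)

lemma blockSetoid_le_multi_of_mem {𝔄 : Set (Set (Fin m))} {B : Set (Fin m)} (h : B ∈ 𝔄) :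
    blockSetoid B ≤ multi 𝔄 := le_sSup ⟨B, h, rfl⟩

lemma multi_rel {𝔄 : Set (Set (Fin m))} (hd : 𝔄.Pairwise Disjoint) (x y : Fin m) :
    multi 𝔄 x y ↔ x = y ∨ ∃ B ∈ 𝔄, x ∈ B ∧ y ∈ B := by
  have heq : Equivalence (fun x y : Fin m => x = y ∨ ∃ B ∈ 𝔄, x ∈ B ∧ y ∈ B) := by
    refine ⟨fun x => Or.inl rfl, ?_, ?_⟩
    · rintro x y (rfl | ⟨B, hB, h1, h2⟩)
      · exact Or.inl rfl
      · exact Or.inr ⟨B, hB, h2, h1⟩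
    · rintro x y z (rfl | ⟨B, hB, h1, h2⟩) (rfl | ⟨C, hC, h3, h4⟩)
      · exact Or.inl rfl
      · exact Or.inr ⟨C, hC, h3, h4⟩
      · exact Or.inr ⟨B, hB, h1, h2⟩
      · by_cases hBC : B = C
        · exact Or.inr ⟨B, hB, h1, hBC ▸ h4⟩
        · exact absurd h3 (Set.disjoint_left.mp (hd hB hC hBC) h2)
  constructor
  · intro h
    have hle : multi 𝔄 ≤ (⟨_, heq⟩ : Setoid (Fin m)) := by
      apply sSup_le
      rintro t ⟨B, hB, rfl⟩
      exact blockSetoid_le_iff.mpr fun x hx y hy => Or.inr ⟨B, hB, hx, hy⟩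
    exact Setoid.le_def.mp hle h
  · rintro (rfl | ⟨B, hB, h1, h2⟩)
    · exact (multi 𝔄).refl x
    · exact Setoid.le_def.mp (blockSetoid_le_multi_of_mem hB) (Or.inr ⟨h1, h2⟩)

lemma multi_mem_Pik {𝔄 : Set (Set (Fin m))} (hd : 𝔄.Pairwise Disjoint)
    (h : ∀ B ∈ 𝔄, B.ncard ≡ 1 [MOD k]) : multi 𝔄 ∈ Pik k m := by
  intro c hc
  obtain ⟨y, rfl⟩ := hc
  by_cases hy : ∃ B ∈ 𝔄, y ∈ B
  · obtain ⟨B, hB, hyB⟩ := hy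
    have : {x | multi 𝔄 x y} = B := by
      ext x
      rw [Set.mem_setOf_eq, multi_rel hd]
      constructor
      · rintro (rfl | ⟨C, hC, hx, hyC⟩)
        · exact hyB
        · by_cases hBC : C = B
          · exact hBC ▸ hx
          · exact absurd hyB (Set.disjoint_left.mp (hd hC hB hBC) hyC)
      · intro hx; exact Or.inr ⟨B, hB, hx, hyB⟩
    rw [this]; exact h B hB
  · have : {x | multi 𝔄 x y} = {y} := by
      ext x
      rw [Set.mem_setOf_eq, multi_rel hd]
      constructor
      · rintro (rfl | ⟨C, hC, _, hyC⟩)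
        · rfl
        · exact absurd ⟨C, hC, hyC⟩ hy
      · rintro rfl; exact Or.inl rfl
    rw [this, Set.ncard_singleton]

lemma blockSetoid_le_multi_iff {𝔄 : Set (Set (Fin m))} {C : Set (Fin m)}
    (hd : 𝔄.Pairwise Disjoint) (h2 : 2 ≤ C.ncard) :
    blockSetoid C ≤ multi 𝔄 ↔ ∃ B ∈ 𝔄, C ⊆ B := by
  constructor
  · intro h
    obtain ⟨x₀, hx₀⟩ := nonempty_of_two_le h2
    obtain ⟨y₀, hy₀, hne⟩ := exists_pair_of_two_le h2 x₀ hx₀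
    have hxy := (multi_rel hd y₀ x₀).mp (blockSetoid_le_iff.mp h y₀ hy₀ x₀ hx₀)
    rcases hxy with rfl | ⟨B, hB, hyB, hxB⟩
    · exact absurd rfl hne
    refine ⟨B, hB, fun c hc => ?_⟩
    have := (multi_rel hd x₀ c).mp (blockSetoid_le_iff.mp h x₀ hx₀ c hc)
    rcases this with rfl | ⟨C', hC', hxC', hcC'⟩
    · exact hxB
    · by_cases hBC : C' = B
      · exact hBC ▸ hcC'
      · exact absurd hxB (Set.disjoint_left.mp (hd hC' hB hBC) hxC')
  · rintro ⟨B, hB, hCB⟩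
    exact le_trans ((blockSetoid_le_blockSetoid h2).mpr hCB) (blockSetoid_le_multi_of_mem hB)

lemma multi_le_multi_iff {𝔄 𝔅 : Set (Set (Fin m))} (hd' : 𝔅.Pairwise Disjoint)
    (h2 : ∀ B ∈ 𝔄, 2 ≤ B.ncard) :
    multi 𝔄 ≤ multi 𝔅 ↔ ∀ B ∈ 𝔄, ∃ C ∈ 𝔅, B ⊆ C := by
  constructor
  · intro h B hB
    exact (blockSetoid_le_multi_iff hd' (h2 B hB)).mp
      (le_trans (blockSetoid_le_multi_of_mem hB) h)
  · intro h
    apply sSup_le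
    rintro t ⟨B, hB, rfl⟩
    exact (blockSetoid_le_multi_iff hd' (h2 B hB)).mpr (h B hB)

lemma eq_of_mem_subset_mem {𝔄 : Set (Set (Fin m))} (hd : 𝔄.Pairwise Disjoint)
    {B B' : Set (Fin m)} (hB : B ∈ 𝔄) (hB' : B' ∈ 𝔄) (hne : B.Nonempty) (h : B ⊆ B') :
    B = B' := by
  by_contra hBB
  obtain ⟨x, hx⟩ := hne
  exact Set.disjoint_left.mp (hd hB hB' hBB) hx (h hx)

lemma maxBelow_multi {𝔄 : Set (Set (Fin m))} (hd : 𝔄.Pairwise Disjoint)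
    (hG : ∀ B ∈ 𝔄, 2 ≤ B.ncard ∧ B.ncard ≡ 1 [MOD k]) :
    maxBelow (BSG k m) (multi 𝔄) = blockSetoid '' 𝔄 := by
  ext g
  constructor
  · rintro ⟨⟨C, h2, h1, rfl⟩, hle, hmax⟩
    obtain ⟨B, hB, hCB⟩ := (blockSetoid_le_multi_iff hd h2).mp hle
    have hBb : blockSetoid B ∈ BSG k m := ⟨B, (hG B hB).1, (hG B hB).2, rfl⟩
    have := hmax (blockSetoid B) hBb (blockSetoid_le_multi_of_mem hB)
      ((blockSetoid_le_blockSetoid h2).mpr hCB)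
    exact ⟨B, hB, this.symm⟩
  · rintro ⟨B, hB, rfl⟩
    refine ⟨⟨B, (hG B hB).1, (hG B hB).2, rfl⟩, blockSetoid_le_multi_of_mem hB, ?_⟩
    rintro g' ⟨C, h2C, h1C, rfl⟩ hle' hBC
    obtain ⟨B', hB', hCB'⟩ := (blockSetoid_le_multi_iff hd h2C).mp hle'
    have hBC' : B ⊆ C := (blockSetoid_le_blockSetoid (hG B hB).1).mp hBC
    have hBB' : B = B' :=
      eq_of_mem_subset_mem hd hB hB' (nonempty_of_two_le (hG B hB).1) (hBC'.trans hCB')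
    have : C = B := subset_antisymm (hBB' ▸ hCB') hBC'
    rw [this]

end Aux

section Sigma

variable {k m : ℕ} {N : Set (Setoid (Fin m))}

/-- A good family of blocks relative to `N`. -/
def GoodF (N : Set (Setoid (Fin m))) (𝔄 : Set (Set (Fin m))) : Prop :=
  (∀ B ∈ 𝔄, blockSetoid B ∈ N) ∧ 𝔄.Pairwise Disjoint

lemma mem_N_block (hN : memN k m N) {g : Setoid (Fin m)} (hg : g ∈ N) :
    ∃ B, 2 ≤ B.ncard ∧ B.ncard ≡ 1 [MOD k] ∧ g = blockSetoid B := hN.1 hg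

lemma block_card_of_mem_N (hN : memN k m N) {B : Set (Fin m)}
    (hB : blockSetoid B ∈ N) : 2 ≤ B.ncard ∧ B.ncard ≡ 1 [MOD k] := by
  obtain ⟨B', h2, h1, he⟩ := mem_N_block hN hB
  obtain rfl : B = B' := block_eq_of_setoid_eq he h2
  exact ⟨h2, h1⟩

lemma good_blocks (hN : memN k m N) {𝔄 : Set (Set (Fin m))} (hG : GoodF N 𝔄) :
    ∀ B ∈ 𝔄, 2 ≤ B.ncard ∧ B.ncard ≡ 1 [MOD k] :=
  fun B hB => block_card_of_mem_N hN (hG.1 B hB)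

/-- Laminarity: two blocks of `N` are nested or disjoint. -/
lemma laminar (hN : memN k m N) {B C : Set (Fin m)}
    (hB : blockSetoid B ∈ N) (hC : blockSetoid C ∈ N) :
    B ⊆ C ∨ C ⊆ B ∨ Disjoint B C := by
  classical
  obtain ⟨h2B, h1B⟩ := block_card_of_mem_N hN hB
  obtain ⟨h2C, h1C⟩ := block_card_of_mem_N hN hC
  by_contra hcon
  push_neg at hcon
  obtain ⟨hBC, hCB, hdis⟩ := hcon
  have hne : blockSetoid B ≠ blockSetoid C := by
    intro h
    exact hBC (block_eq_of_setoid_eq h h2C ▸ Set.Subset.rfl)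
  set S : Finset (Setoid (Fin m)) := {blockSetoid B, blockSetoid C} with hS
  have hcard : 2 ≤ S.card := le_of_eq (Finset.card_pair hne).symm
  have hsub : ↑S ⊆ N := by
    intro a ha
    simp only [hS, Finset.coe_insert, Finset.coe_singleton, Set.mem_insert_iff,
      Set.mem_singleton_iff] at ha
    rcases ha with rfl | rfl
    · exact hB
    · exact hC
  have hanti : ∀ a ∈ S, ∀ b ∈ S, a ≠ b → ¬ a ≤ b := by
    intro a ha b hb hab
    simp only [hS, Finset.mem_insert, Finset.mem_singleton] at ha hb
    rcases ha with rfl | rfl <;> rcases hb with rfl | rfl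
    · exact absurd rfl hab
    · intro h; exact hBC ((blockSetoid_le_blockSetoid h2B).mp h)
    · intro h; exact hCB ((blockSetoid_le_blockSetoid h2C).mp h)
    · exact absurd rfl hab
  obtain ⟨⟨z, hz, _⟩, hnot⟩ := hN.2 S hsub hcard hanti
  obtain ⟨hzP, hub, hmin⟩ := hz
  have hBz : blockSetoid B ≤ z := hub _ (by simp [hS])
  have hCz : blockSetoid C ≤ z := hub _ (by simp [hS])
  obtain ⟨x₀, hx₀B, hx₀C⟩ := Set.not_disjoint_iff.mp hdis
  set D : Set (Fin m) := {x | z x x₀} with hD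
  have hBD : B ⊆ D := fun x hx => Setoid.le_def.mp hBz (Or.inr ⟨hx, hx₀B⟩)
  have hCD : C ⊆ D := fun x hx => Setoid.le_def.mp hCz (Or.inr ⟨hx, hx₀C⟩)
  have h2D : 2 ≤ D.ncard := le_trans h2B (Set.ncard_le_ncard hBD (Set.toFinite D))
  have h1D : D.ncard ≡ 1 [MOD k] := hzP D ⟨x₀, rfl⟩
  have hDz : blockSetoid D ≤ z := by
    rw [Setoid.le_def]
    rintro x y (rfl | ⟨hx, hy⟩)
    · exact z.refl x
    · exact z.trans hx (z.symm hy)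
  have hDub : ∀ a ∈ (S : Set (Setoid (Fin m))), a ≤ blockSetoid D := by
    intro a ha
    simp only [hS, Finset.coe_insert, Finset.coe_singleton, Set.mem_insert_iff,
      Set.mem_singleton_iff] at ha
    rcases ha with rfl | rfl
    · exact (blockSetoid_le_blockSetoid h2B).mpr hBD
    · exact (blockSetoid_le_blockSetoid h2C).mpr hCD
  have hzD : blockSetoid D = z := hmin _ (blockSetoid_mem_Pik h1D) hDub hDz
  exact hnot z ⟨hzP, hub, hmin⟩ ⟨D, h2D, h1D, hzD.symm⟩

lemma multi_mem_SigmaSet (hN : memN k m N) {𝔄 : Set (Set (Fin m))} (hG : GoodF N 𝔄) :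
    multi 𝔄 ∈ SigmaSet k m N := by
  refine ⟨blockSetoid '' 𝔄, ?_, ?_, ?_, ?_⟩
  · rintro g ⟨B, hB, rfl⟩; exact hG.1 B hB
  · exact multi_mem_Pik hG.2 fun B hB => (good_blocks hN hG B hB).2
  · rintro a ⟨B, hB, rfl⟩; exact blockSetoid_le_multi_of_mem hB
  · intro w _ hub hle
    refine le_antisymm hle (sSup_le ?_)
    rintro t ⟨B, hB, rfl⟩
    exact hub _ ⟨B, hB, rfl⟩

lemma multi_empty : multi (∅ : Set (Set (Fin m))) = ⊥ := by
  rw [multi, Set.image_empty, sSup_empty]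

lemma multi_ne_bot (hN : memN k m N) {𝔄 : Set (Set (Fin m))} (hG : GoodF N 𝔄)
    (hA : 𝔄.Nonempty) : multi 𝔄 ≠ ⊥ := by
  intro h
  obtain ⟨B, hB⟩ := hA
  have h2 := (good_blocks hN hG B hB).1
  have : ∀ C ∈ 𝔄, ∃ D ∈ (∅ : Set (Set (Fin m))), C ⊆ D := by
    rw [← multi_le_multi_iff (Set.pairwise_empty _) (fun C hC => (good_blocks hN hG C hC).1),
      multi_empty, h]
  obtain ⟨D, hD, _⟩ := this B hB
  exact hD

/-- Every element of a finite family of blocks admits a maximal superset in the family. -/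
lemma exists_max_block {𝔛 : Set (Set (Fin m))} {B : Set (Fin m)} (hB : B ∈ 𝔛) :
    ∃ C, (C ∈ 𝔛 ∧ B ⊆ C) ∧ ∀ D ∈ 𝔛, C ⊆ D → C = D := by
  classical
  set T : Set (Set (Fin m)) := {C | C ∈ 𝔛 ∧ B ⊆ C} with hT
  have hTfin : T.Finite := Set.toFinite T
  have hTne : (hTfin.toFinset).Nonempty := ⟨B, hTfin.mem_toFinset.mpr ⟨hB, Set.Subset.rfl⟩⟩
  obtain ⟨C, hC, hmax⟩ := Finset.exists_max_image hTfin.toFinset Set.ncard hTne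
  rw [hTfin.mem_toFinset] at hC
  refine ⟨C, hC, fun D hD hCD => ?_⟩
  have hDT : D ∈ hTfin.toFinset := hTfin.mem_toFinset.mpr ⟨hD, hC.2.trans hCD⟩
  exact Set.eq_of_subset_of_ncard_le hCD (hmax D hDT) (Set.toFinite D)

/-- The canonical block family of an element of `Σ(N)`. -/
def blocksOf (k : ℕ) {m : ℕ} (z : Setoid (Fin m)) : Set (Set (Fin m)) :=
  {B | 2 ≤ B.ncard ∧ blockSetoid B ∈ maxBelow (BSG k m) z}

lemma blocksOf_multi (hN : memN k m N) {𝔄 : Set (Set (Fin m))} (hG : GoodF N 𝔄) :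
    blocksOf k (multi 𝔄) = 𝔄 := by
  ext B
  constructor
  · rintro ⟨h2, hmem⟩
    rw [maxBelow_multi hG.2 (good_blocks hN hG)] at hmem
    obtain ⟨B', hB', he⟩ := hmem
    obtain rfl : B' = B := block_eq_of_setoid_eq he h2
    exact hB'
  · intro hB
    refine ⟨(good_blocks hN hG B hB).1, ?_⟩
    rw [maxBelow_multi hG.2 (good_blocks hN hG)]
    exact ⟨B, hB, rfl⟩

/-- Structure of elements of `Σ(N) \ {⊥}`. -/
lemma sigma_struct (hN : memN k m N) {z : Setoid (Fin m)}
    (hz : z ∈ SigmaSet k m N \ {⊥}) :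
    GoodF N (blocksOf k z) ∧ (blocksOf k z).Nonempty ∧ z = multi (blocksOf k z) := by
  obtain ⟨⟨X, hXN, hmin⟩, hbot⟩ := hz
  classical
  set XB : Set (Set (Fin m)) := {B | blockSetoid B ∈ X ∧ 2 ≤ B.ncard} with hXB
  set M : Set (Set (Fin m)) := {B | B ∈ XB ∧ ∀ D ∈ XB, B ⊆ D → B = D} with hM
  have hMsubN : ∀ B ∈ M, blockSetoid B ∈ N := fun B hB => hXN hB.1.1
  have hMd : M.Pairwise Disjoint := by
    intro B hB C hC hne
    rcases laminar hN (hMsubN B hB) (hMsubN C hC) with h | h | h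
    · exact absurd (hB.2 C hC.1 h) hne
    · exact absurd (hC.2 B hB.1 h).symm hne
    · exact h
  have hGM : GoodF N M := ⟨hMsubN, hMd⟩
  have hup : ∀ B ∈ XB, ∃ C ∈ M, B ⊆ C := by
    intro B hB
    obtain ⟨C, ⟨hC1, hC2⟩, hmaxC⟩ := exists_max_block (𝔛 := XB) hB
    exact ⟨C, ⟨hC1, hmaxC⟩, hC2⟩
  have hXblock : ∀ a ∈ X, ∃ B ∈ XB, a = blockSetoid B := by
    intro a ha
    obtain ⟨B, h2, _, rfl⟩ := mem_N_block hN (hXN ha)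
    exact ⟨B, ⟨ha, h2⟩, rfl⟩
  -- z = multi M
  have hzM : z = multi M := by
    obtain ⟨hzP, hub, hm⟩ := hmin
    have hWub : ∀ a ∈ X, a ≤ multi M := by
      intro a ha
      obtain ⟨B, hB, rfl⟩ := hXblock a ha
      obtain ⟨C, hC, hBC⟩ := hup B hB
      exact le_trans ((blockSetoid_le_blockSetoid hB.2).mpr hBC)
        (blockSetoid_le_multi_of_mem hC)
    have hWle : multi M ≤ z := by
      apply sSup_le
      rintro t ⟨B, hB, rfl⟩
      exact hub _ hB.1.1
    exact (hm (multi M)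
      (multi_mem_Pik hMd fun B hB => (block_card_of_mem_N hN (hMsubN B hB)).2)
      hWub hWle).symm
  have hMne : M.Nonempty := by
    by_contra hE
    rw [Set.not_nonempty_iff_eq_empty] at hE
    rw [hE, multi_empty] at hzM
    exact hbot hzM
  have hblocks : blocksOf k z = M := by rw [hzM]; exact blocksOf_multi hN hGM
  rw [hblocks]
  exact ⟨hGM, hMne, hzM⟩

lemma maxBelow_eq_image_blocksOf (hN : memN k m N) {z : Setoid (Fin m)}
    (hz : z ∈ SigmaSet k m N \ {⊥}) :
    maxBelow (BSG k m) z = blockSetoid '' blocksOf k z := by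
  obtain ⟨hG, _, hzm⟩ := sigma_struct hN hz
  conv_lhs => rw [hzm]
  exact maxBelow_multi hG.2 (good_blocks hN hG)

lemma maxBelow_nonempty (hN : memN k m N) {z : Setoid (Fin m)}
    (hz : z ∈ SigmaSet k m N \ {⊥}) : (maxBelow (BSG k m) z).Nonempty := by
  obtain ⟨_, hne, _⟩ := sigma_struct hN hz
  rw [maxBelow_eq_image_blocksOf hN hz]
  exact hne.image _

lemma maxBelow_subset_N (hN : memN k m N) {z : Setoid (Fin m)}
    (hz : z ∈ SigmaSet k m N \ {⊥}) : maxBelow (BSG k m) z ⊆ N := by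
  rw [maxBelow_eq_image_blocksOf hN hz]
  rintro g ⟨B, hB, rfl⟩
  exact (sigma_struct hN hz).1.1 B hB

lemma multi_inj_of_good (hN : memN k m N) {𝔄 𝔅 : Set (Set (Fin m))}
    (hA : GoodF N 𝔄) (hB : GoodF N 𝔅) (h : multi 𝔄 = multi 𝔅) : 𝔄 = 𝔅 := by
  rw [← blocksOf_multi hN hA, h, blocksOf_multi hN hB]

end Sigma

section Analytic

noncomputable instance fintypeSetoidFin (m : ℕ) : Fintype (Setoid (Fin m)) :=
  Fintype.ofFinite _

variable {k m : ℕ} {N : Set (Setoid (Fin m))}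

/-- The barycenter vertex map. -/
noncomputable def bary (k m : ℕ) : Setoid (Fin m) → Setoid (Fin m) → ℝ := fun z g =>
  if g ∈ maxBelow (BSG k m) z then ((maxBelow (BSG k m) z).ncard : ℝ)⁻¹ else 0

lemma bary_nonneg (z g : Setoid (Fin m)) : 0 ≤ bary k m z g := by
  unfold bary
  split
  · positivity
  · exact le_refl 0

lemma bary_eq_zero {z g : Setoid (Fin m)} (h : g ∉ maxBelow (BSG k m) z) :
    bary k m z g = 0 := by simp [bary, h]

lemma bary_eq_inv {z g : Setoid (Fin m)} (h : g ∈ maxBelow (BSG k m) z) :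
    bary k m z g = ((maxBelow (BSG k m) z).ncard : ℝ)⁻¹ := by simp [bary, h]

lemma ncard_ne_zero_of_nonempty {z : Setoid (Fin m)}
    (h : (maxBelow (BSG k m) z).Nonempty) :
    ((maxBelow (BSG k m) z).ncard : ℝ) ≠ 0 := by
  have := (Set.ncard_pos (Set.toFinite _)).mpr h
  exact Nat.cast_ne_zero.mpr (Nat.pos_iff_ne_zero.mp this)

lemma bary_pos {z g : Setoid (Fin m)} (hne : (maxBelow (BSG k m) z).Nonempty)
    (h : g ∈ maxBelow (BSG k m) z) : 0 < bary k m z g := by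
  rw [bary_eq_inv h]
  have := (Set.ncard_pos (Set.toFinite (maxBelow (BSG k m) z))).mpr hne
  positivity

lemma sum_bary {z : Setoid (Fin m)} (h : (maxBelow (BSG k m) z).Nonempty) :
    ∑ g, bary k m z g = 1 := by
  classical
  set s := maxBelow (BSG k m) z with hs
  have hfilter : Finset.univ.filter (· ∈ s) = (Set.toFinite s).toFinset := by
    ext g
    simp only [Finset.mem_filter, Finset.mem_univ, true_and, Set.Finite.mem_toFinset]
  calc ∑ g, bary k m z g
      = ∑ g ∈ Finset.univ.filter (· ∈ s), ((s.ncard : ℝ))⁻¹ := by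
        rw [Finset.sum_filter]
        exact Finset.sum_congr rfl fun g _ => rfl
    _ = ((Set.toFinite s).toFinset.card : ℝ) * ((s.ncard : ℝ))⁻¹ := by
        rw [hfilter, Finset.sum_const, nsmul_eq_mul]
    _ = 1 := by
        rw [← Set.ncard_eq_toFinset_card s (Set.toFinite s)]
        exact mul_inv_cancel₀ (ncard_ne_zero_of_nonempty h)

lemma support_bary {z : Setoid (Fin m)} (h : (maxBelow (BSG k m) z).Nonempty) :
    Function.support (bary k m z) = maxBelow (BSG k m) z := by
  ext g
  rw [Function.mem_support]
  constructor
  · intro hne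
    by_contra hg
    exact hne (bary_eq_zero hg)
  · intro hg
    rw [bary_eq_inv hg]
    exact inv_ne_zero (ncard_ne_zero_of_nonempty h)

lemma linExt_apply (f0 : Setoid (Fin m) → Setoid (Fin m) → ℝ) (w : Setoid (Fin m) → ℝ)
    (g : Setoid (Fin m)) : linExt f0 w g = ∑ v, w v * f0 v g :=
  finsum_eq_sum_of_fintype _

/-- The cone over the order complex. -/
def coneP (k m : ℕ) (N : Set (Setoid (Fin m))) : Set (Setoid (Fin m) → ℝ) :=
  {w | (∀ v, 0 ≤ w v) ∧ Function.support w ⊆ SigmaSet k m N \ {⊥} ∧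
    IsChain (· ≤ ·) (Function.support w)}

lemma linExt_nonneg {w : Setoid (Fin m) → ℝ} (hw : ∀ v, 0 ≤ w v)
    (g : Setoid (Fin m)) : 0 ≤ linExt (bary k m) w g := by
  rw [linExt_apply]
  exact Finset.sum_nonneg fun v _ => mul_nonneg (hw v) (bary_nonneg v g)

lemma support_linExt (hN : memN k m N) {w : Setoid (Fin m) → ℝ}
    (hw : w ∈ coneP k m N) :
    Function.support (linExt (bary k m) w) =
      ⋃ x ∈ Function.support w, maxBelow (BSG k m) x := by
  ext g
  rw [Function.mem_support]
  constructor
  · intro hne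
    rw [linExt_apply] at hne
    obtain ⟨v, _, hv⟩ := Finset.exists_ne_zero_of_sum_ne_zero hne
    have hv1 : w v ≠ 0 := fun h => hv (by simp [h])
    have hv2 : g ∈ maxBelow (BSG k m) v := by
      by_contra hg
      exact hv (by simp [bary_eq_zero hg])
    exact Set.mem_biUnion hv1 hv2
  · intro hg
    obtain ⟨x, hx, hgx⟩ := Set.mem_iUnion₂.mp hg
    have hpos : 0 < w x * bary k m x g := by
      apply mul_pos (lt_of_le_of_ne (hw.1 x) (Ne.symm hx))
      exact bary_pos (maxBelow_nonempty hN (hw.2.1 hx)) hgx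
    have hle : w x * bary k m x g ≤ linExt (bary k m) w g := by
      rw [linExt_apply]
      exact Finset.single_le_sum
        (fun v _ => mul_nonneg (hw.1 v) (bary_nonneg v g)) (Finset.mem_univ x)
    exact ne_of_gt (lt_of_lt_of_le hpos hle)

lemma sum_linExt (hN : memN k m N) {w : Setoid (Fin m) → ℝ} (hw : w ∈ coneP k m N) :
    ∑ g, linExt (bary k m) w g = ∑ v, w v := by
  simp_rw [linExt_apply]
  rw [Finset.sum_comm]
  refine Finset.sum_congr rfl fun v _ => ?_
  rw [← Finset.mul_sum]
  by_cases hv : w v = 0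
  · simp [hv]
  · rw [sum_bary (maxBelow_nonempty hN (hw.2.1 hv)), mul_one]

lemma linExt_zero : linExt (bary k m) (0 : Setoid (Fin m) → ℝ) = 0 := by
  funext g
  rw [linExt_apply]
  simp

/-- A finite nonempty chain has a greatest element. -/
lemma chain_top {α : Type*} [PartialOrder α] {s : Set α} (hne : s.Nonempty)
    (hfin : s.Finite) (hc : IsChain (· ≤ ·) s) : ∃ z ∈ s, ∀ x ∈ s, x ≤ z := by
  obtain ⟨z, hz, hmax⟩ : ∃ z ∈ hfin.toFinset, ∀ x ∈ hfin.toFinset, ¬ z < x := by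
    obtain ⟨z, hz, hm⟩ := Finset.exists_maximal (s := hfin.toFinset)
      ⟨hne.choose, hfin.mem_toFinset.mpr hne.choose_spec⟩
    exact ⟨z, hz, fun x hx hlt => (lt_iff_le_not_ge.mp hlt).2 (hm hx (lt_iff_le_not_ge.mp hlt).1)⟩
  rw [hfin.mem_toFinset] at hz
  refine ⟨z, hz, fun x hx => ?_⟩
  by_cases hxz : x = z
  · exact le_of_eq hxz
  · rcases hc hx hz hxz with h | h
    · exact h
    · by_contra hxx
      exact hmax x (hfin.mem_toFinset.mpr hx) (lt_of_le_of_ne h (fun he => hxx (le_of_eq he.symm)))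
end Analytic

section Core

variable {k m : ℕ} {N : Set (Setoid (Fin m))}

lemma sig_le_iff (hN : memN k m N) {x z : Setoid (Fin m)}
    (hx : x ∈ SigmaSet k m N \ {⊥}) (hz : z ∈ SigmaSet k m N \ {⊥}) :
    x ≤ z ↔ ∀ B ∈ blocksOf k x, ∃ C ∈ blocksOf k z, B ⊆ C := by
  obtain ⟨hGx, _, hex⟩ := sigma_struct hN hx
  obtain ⟨hGz, _, hez⟩ := sigma_struct hN hz
  conv_lhs => rw [hex, hez]
  exact multi_le_multi_iff hGz.2 fun B hB => hB.1

lemma sig_eq_of_blocks_eq (hN : memN k m N) {x z : Setoid (Fin m)}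
    (hx : x ∈ SigmaSet k m N \ {⊥}) (hz : z ∈ SigmaSet k m N \ {⊥})
    (h : blocksOf k x = blocksOf k z) : x = z := by
  rw [(sigma_struct hN hx).2.2, (sigma_struct hN hz).2.2, h]

lemma mem_blocksOf_interval (hN : memN k m N) {x y z : Setoid (Fin m)}
    (hx : x ∈ SigmaSet k m N \ {⊥}) (hy : y ∈ SigmaSet k m N \ {⊥})
    (hz : z ∈ SigmaSet k m N \ {⊥}) (hxy : x ≤ y) (hyz : y ≤ z) {B : Set (Fin m)}
    (hBx : B ∈ blocksOf k x) (hBz : B ∈ blocksOf k z) : B ∈ blocksOf k y := by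
  obtain ⟨C, hC, hBC⟩ := (sig_le_iff hN hx hy).mp hxy B hBx
  obtain ⟨D, hD, hCD⟩ := (sig_le_iff hN hy hz).mp hyz C hC
  have hBD : B = D := eq_of_mem_subset_mem (sigma_struct hN hz).1.2 hBz hD
    (nonempty_of_two_le hBx.1) (hBC.trans hCD)
  have hCB : C = B := subset_antisymm (hBD ▸ hCD) hBC
  exact hCB ▸ hC

lemma exists_block_not_lower (hN : memN k m N) {x z : Setoid (Fin m)}
    (hx : x ∈ SigmaSet k m N \ {⊥}) (hz : z ∈ SigmaSet k m N \ {⊥})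
    (hle : x ≤ z) (hne : x ≠ z) : ∃ B ∈ blocksOf k z, B ∉ blocksOf k x := by
  by_contra hcon
  push_neg at hcon
  apply hne
  apply sig_eq_of_blocks_eq hN hx hz
  apply subset_antisymm
  · intro B hB
    obtain ⟨D, hD, hBD⟩ := (sig_le_iff hN hx hz).mp hle B hB
    have hDx : D ∈ blocksOf k x := hcon D hD
    have : B = D := eq_of_mem_subset_mem (sigma_struct hN hx).1.2 hB hDx
      (nonempty_of_two_le hB.1) hBD
    exact this ▸ hD
  · exact hcon

lemma top_blocks (hN : memN k m N) {w u : Setoid (Fin m) → ℝ}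
    (hw : w ∈ coneP k m N) (hu : linExt (bary k m) w = u) {z : Setoid (Fin m)}
    (hz : z ∈ Function.support w) (htop : ∀ x ∈ Function.support w, x ≤ z) :
    blocksOf k z = {B | (2 ≤ B.ncard ∧ blockSetoid B ∈ Function.support u) ∧
      ∀ C, 2 ≤ C.ncard → blockSetoid C ∈ Function.support u → B ⊆ C → B = C} := by
  subst hu
  have hsupp := support_linExt hN hw
  have hzS : z ∈ SigmaSet k m N \ {⊥} := hw.2.1 hz
  ext B
  constructor
  · intro hB
    have hBsupp : blockSetoid B ∈ Function.support (linExt (bary k m) w) := by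
      rw [hsupp]; exact Set.mem_biUnion hz hB.2
    refine ⟨⟨hB.1, hBsupp⟩, ?_⟩
    intro C h2C hCsupp hBC
    rw [hsupp] at hCsupp
    obtain ⟨x, hx, hCx⟩ := Set.mem_iUnion₂.mp hCsupp
    obtain ⟨D, hD, hCD⟩ := (sig_le_iff hN (hw.2.1 hx) hzS).mp (htop x hx) C ⟨h2C, hCx⟩
    have hBD : B = D := eq_of_mem_subset_mem (sigma_struct hN hzS).1.2 hB hD
      (nonempty_of_two_le hB.1) (hBC.trans hCD)
    exact subset_antisymm hBC (hBD ▸ hCD)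
  · rintro ⟨⟨h2, hsuppB⟩, hmax⟩
    rw [hsupp] at hsuppB
    obtain ⟨x, hx, hBx⟩ := Set.mem_iUnion₂.mp hsuppB
    obtain ⟨D, hD, hBD⟩ := (sig_le_iff hN (hw.2.1 hx) hzS).mp (htop x hx) B ⟨h2, hBx⟩
    have hDsupp : blockSetoid D ∈ Function.support (linExt (bary k m) w) := by
      rw [hsupp]; exact Set.mem_biUnion hz hD.2
    have : B = D := hmax D hD.1 hDsupp hBD
    exact this ▸ hD

lemma top_lb {w : Setoid (Fin m) → ℝ} (hw : w ∈ coneP k m N) {z g : Setoid (Fin m)}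
    (hg : g ∈ maxBelow (BSG k m) z) :
    w z * ((maxBelow (BSG k m) z).ncard : ℝ)⁻¹ ≤ linExt (bary k m) w g := by
  rw [linExt_apply]
  have h1 : w z * bary k m z g ≤ ∑ v, w v * bary k m v g :=
    Finset.single_le_sum (f := fun v => w v * bary k m v g)
      (fun v _ => mul_nonneg (hw.1 v) (bary_nonneg v g)) (Finset.mem_univ z)
  rwa [bary_eq_inv hg] at h1

lemma top_exists (hN : memN k m N) {w : Setoid (Fin m) → ℝ} (hw : w ∈ coneP k m N)
    {z : Setoid (Fin m)} (hz : z ∈ Function.support w)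
    (htop : ∀ x ∈ Function.support w, x ≤ z) :
    ∃ g ∈ maxBelow (BSG k m) z,
      linExt (bary k m) w g = w z * ((maxBelow (BSG k m) z).ncard : ℝ)⁻¹ := by
  have hzS : z ∈ SigmaSet k m N \ {⊥} := hw.2.1 hz
  by_cases hrest : Function.support w \ {z} = ∅
  · obtain ⟨g, hg⟩ := maxBelow_nonempty hN hzS
    refine ⟨g, hg, ?_⟩
    rw [linExt_apply, Finset.sum_eq_single z ?_ ?_, bary_eq_inv hg]
    · intro v _ hvz
      have hv : v ∉ Function.support w := by
        intro hv
        have hmem : v ∈ Function.support w \ {z} := ⟨hv, by simp [hvz]⟩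
        rw [hrest] at hmem
        exact hmem
      rw [Function.notMem_support.mp hv, zero_mul]
    · intro h; exact absurd (Finset.mem_univ z) h
  · obtain ⟨x₂, hx₂, hx₂top⟩ := chain_top (Set.nonempty_iff_ne_empty.mpr hrest)
      (Set.toFinite _) (hw.2.2.mono Set.diff_subset)
    have hx₂w : x₂ ∈ Function.support w := hx₂.1
    have hx₂S : x₂ ∈ SigmaSet k m N \ {⊥} := hw.2.1 hx₂w
    have hx₂z : x₂ ≤ z := htop _ hx₂w
    have hx₂ne : x₂ ≠ z := fun h => hx₂.2 (Set.mem_singleton_iff.mpr h)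
    obtain ⟨B, hBz, hBx₂⟩ := exists_block_not_lower hN hx₂S hzS hx₂z hx₂ne
    refine ⟨blockSetoid B, hBz.2, ?_⟩
    rw [linExt_apply, Finset.sum_eq_single z ?_ ?_, bary_eq_inv hBz.2]
    · intro v _ hvz
      by_cases hv : v ∈ Function.support w
      · have hvx₂ : v ≤ x₂ := hx₂top v ⟨hv, by simp [hvz]⟩
        have hnm : blockSetoid B ∉ maxBelow (BSG k m) v := by
          intro hmem
          exact hBx₂ (mem_blocksOf_interval hN (hw.2.1 hv) hx₂S hzS hvx₂ hx₂z
            ⟨hBz.1, hmem⟩ hBz)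
        rw [bary_eq_zero hnm, mul_zero]
      · rw [Function.notMem_support.mp hv, zero_mul]
    · intro h; exact absurd (Finset.mem_univ z) h

lemma eq_zero_of_linExt_zero (hN : memN k m N) {w : Setoid (Fin m) → ℝ}
    (hw : w ∈ coneP k m N) (h : linExt (bary k m) w = 0) : w = 0 := by
  by_contra hne
  have hne' : Function.support w ≠ ∅ := fun he =>
    hne (Function.support_eq_empty_iff.mp he)
  obtain ⟨x, hx⟩ := Set.nonempty_iff_ne_empty.mpr hne'
  obtain ⟨g, hg⟩ := maxBelow_nonempty hN (hw.2.1 hx)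
  have : g ∈ Function.support (linExt (bary k m) w) := by
    rw [support_linExt hN hw]
    exact Set.mem_biUnion hx hg
  rw [h] at this
  exact this rfl

lemma inj_aux (hN : memN k m N) :
    ∀ n (w₁ w₂ : Setoid (Fin m) → ℝ), w₁ ∈ coneP k m N → w₂ ∈ coneP k m N →
      (Function.support w₁ ∪ Function.support w₂).ncard ≤ n →
      linExt (bary k m) w₁ = linExt (bary k m) w₂ → w₁ = w₂ := by
  intro n
  induction n with
  | zero =>
    intro w₁ w₂ _ _ hcard _
    have h0 : (Function.support w₁ ∪ Function.support w₂) = ∅ :=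
      (Set.ncard_eq_zero (Set.toFinite _)).mp (Nat.le_zero.mp hcard)
    obtain ⟨h1, h2⟩ := Set.union_empty_iff.mp h0
    rw [Function.support_eq_empty_iff.mp h1, Function.support_eq_empty_iff.mp h2]
  | succ n ih =>
    intro w₁ w₂ hw₁ hw₂ hcard hΦ
    by_cases h1 : Function.support w₁ = ∅
    · rw [Function.support_eq_empty_iff] at h1
      have hz2 : linExt (bary k m) w₂ = 0 := by rw [← hΦ, h1, linExt_zero]
      rw [h1, eq_zero_of_linExt_zero hN hw₂ hz2]
    by_cases h2 : Function.support w₂ = ∅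
    · rw [Function.support_eq_empty_iff] at h2
      have hz1 : linExt (bary k m) w₁ = 0 := by rw [hΦ, h2, linExt_zero]
      rw [h2, eq_zero_of_linExt_zero hN hw₁ hz1]
    obtain ⟨z₁, hz₁, htop₁⟩ := chain_top (Set.nonempty_iff_ne_empty.mpr h1)
      (Set.toFinite _) hw₁.2.2
    obtain ⟨z₂, hz₂, htop₂⟩ := chain_top (Set.nonempty_iff_ne_empty.mpr h2)
      (Set.toFinite _) hw₂.2.2
    have hbl : blocksOf k z₁ = blocksOf k z₂ := by
      rw [top_blocks hN hw₁ rfl hz₁ htop₁, top_blocks hN hw₂ hΦ.symm hz₂ htop₂]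
    obtain rfl : z₁ = z₂ := sig_eq_of_blocks_eq hN (hw₁.2.1 hz₁) (hw₂.2.1 hz₂) hbl
    have hinvpos : 0 < ((maxBelow (BSG k m) z₁).ncard : ℝ)⁻¹ := by
      have := (Set.ncard_pos (Set.toFinite _)).mpr (maxBelow_nonempty hN (hw₁.2.1 hz₁))
      positivity
    obtain ⟨g₁, hg₁, he₁⟩ := top_exists hN hw₁ hz₁ htop₁
    obtain ⟨g₂, hg₂, he₂⟩ := top_exists hN hw₂ hz₂ htop₂
    have hzz : w₁ z₁ = w₂ z₁ := by
      have hle12 : w₁ z₁ * ((maxBelow (BSG k m) z₁).ncard : ℝ)⁻¹ ≤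
          w₂ z₁ * ((maxBelow (BSG k m) z₁).ncard : ℝ)⁻¹ := by
        rw [← he₂]
        calc w₁ z₁ * ((maxBelow (BSG k m) z₁).ncard : ℝ)⁻¹
            ≤ linExt (bary k m) w₁ g₂ := top_lb hw₁ hg₂
          _ = linExt (bary k m) w₂ g₂ := by rw [hΦ]
      have hle21 : w₂ z₁ * ((maxBelow (BSG k m) z₁).ncard : ℝ)⁻¹ ≤
          w₁ z₁ * ((maxBelow (BSG k m) z₁).ncard : ℝ)⁻¹ := by
        rw [← he₁]
        calc w₂ z₁ * ((maxBelow (BSG k m) z₁).ncard : ℝ)⁻¹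
            ≤ linExt (bary k m) w₂ g₁ := top_lb hw₂ hg₁
          _ = linExt (bary k m) w₁ g₁ := by rw [hΦ]
      exact le_antisymm ((mul_le_mul_iff_of_pos_right hinvpos).mp hle12)
        ((mul_le_mul_iff_of_pos_right hinvpos).mp hle21)
    have key : ∀ (w : Setoid (Fin m) → ℝ) (g : Setoid (Fin m)),
        linExt (bary k m) (fun v => if v = z₁ then 0 else w v) g =
          linExt (bary k m) w g - w z₁ * bary k m z₁ g := by
      intro w g
      rw [linExt_apply, linExt_apply]
      have hterm : ∀ v, (if v = z₁ then 0 else w v) * bary k m v g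
          = w v * bary k m v g - (if v = z₁ then w z₁ * bary k m z₁ g else 0) := by
        intro v; by_cases hv : v = z₁ <;> simp [hv]
      simp only [hterm]
      rw [Finset.sum_sub_distrib,
        Finset.sum_ite_eq' Finset.univ z₁ (fun _ => w z₁ * bary k m z₁ g)]
      simp
    have hcone' : ∀ w : Setoid (Fin m) → ℝ, w ∈ coneP k m N →
        (Function.support (fun v => if v = z₁ then 0 else w v) ⊆ Function.support w) := by
      intro w _ v hv
      by_cases hvz : v = z₁
      · exfalso; apply hv; simp [hvz]
      · rw [Function.mem_support]
        intro h0
        apply hv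
        simp [hvz, h0]
    have hmem' : ∀ w : Setoid (Fin m) → ℝ, w ∈ coneP k m N →
        (fun v => if v = z₁ then 0 else w v) ∈ coneP k m N := by
      intro w hw
      refine ⟨fun v => ?_, (hcone' w hw).trans hw.2.1, hw.2.2.mono (hcone' w hw)⟩
      by_cases hvz : v = z₁ <;> simp [hvz, hw.1 v]
    have hΦ' : linExt (bary k m) (fun v => if v = z₁ then 0 else w₁ v) =
        linExt (bary k m) (fun v => if v = z₁ then 0 else w₂ v) := by
      funext g
      rw [key w₁ g, key w₂ g, hΦ, hzz]
    have hzmem : z₁ ∈ Function.support w₁ ∪ Function.support w₂ :=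
      Set.mem_union_left _ hz₁
    have hsubU : Function.support (fun v => if v = z₁ then 0 else w₁ v) ∪
        Function.support (fun v => if v = z₁ then 0 else w₂ v) ⊆
        (Function.support w₁ ∪ Function.support w₂) \ {z₁} := by
      intro v hv
      have hvz : v ≠ z₁ := by
        rintro rfl
        rcases hv with hv | hv <;> exact hv (by simp)
      rcases hv with hv | hv
      · exact ⟨Set.mem_union_left _ (hcone' w₁ hw₁ hv), by simp [hvz]⟩
      · exact ⟨Set.mem_union_right _ (hcone' w₂ hw₂ hv), by simp [hvz]⟩
    have hcard' : (Function.support (fun v => if v = z₁ then 0 else w₁ v) ∪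
        Function.support (fun v => if v = z₁ then 0 else w₂ v)).ncard ≤ n := by
      have hlt := Set.ncard_diff_singleton_lt_of_mem hzmem (Set.toFinite _)
      have hle := Set.ncard_le_ncard hsubU (Set.toFinite _)
      omega
    have hw' := ih _ _ (hmem' w₁ hw₁) (hmem' w₂ hw₂) hcard' hΦ'
    funext v
    by_cases hvz : v = z₁
    · rw [hvz]; exact hzz
    · have := congrFun hw' v
      simpa [hvz] using this

end Core

section Surj

variable {k m : ℕ} {N : Set (Setoid (Fin m))}

lemma surj_aux (hN : memN k m N) :
    ∀ n (u : Setoid (Fin m) → ℝ), (Function.support u).ncard ≤ n →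
      (∀ v, 0 ≤ u v) → Function.support u ⊆ N →
      ∃ w ∈ coneP k m N, linExt (bary k m) w = u ∧
        ∀ x ∈ Function.support w, maxBelow (BSG k m) x ⊆ Function.support u := by
  intro n
  induction n with
  | zero =>
    intro u hcard _ _
    have h0 : Function.support u = ∅ :=
      (Set.ncard_eq_zero (Set.toFinite _)).mp (Nat.le_zero.mp hcard)
    refine ⟨0, ⟨fun v => le_refl 0, ?_, ?_⟩, ?_, ?_⟩
    · simp
    · simp only [Function.support_zero]; exact IsChain.empty
    · rw [linExt_zero, Function.support_eq_empty_iff.mp h0]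
    · simp
  | succ n ih =>
    intro u hcard hu0 huN
    by_cases h0 : Function.support u = ∅
    · refine ⟨0, ⟨fun v => le_refl 0, ?_, ?_⟩, ?_, ?_⟩
      · simp
      · simp only [Function.support_zero]; exact IsChain.empty
      · rw [linExt_zero, Function.support_eq_empty_iff.mp h0]
      · simp
    -- main construction
    set S : Set (Setoid (Fin m)) := Function.support u with hS
    set XB : Set (Set (Fin m)) := {B | 2 ≤ B.ncard ∧ blockSetoid B ∈ S} with hXB
    set M : Set (Set (Fin m)) := {B | B ∈ XB ∧ ∀ D ∈ XB, B ⊆ D → B = D} with hM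
    have hMsubN : ∀ B ∈ M, blockSetoid B ∈ N := fun B hB => huN hB.1.2
    have hMd : M.Pairwise Disjoint := by
      intro B hB C hC hne
      rcases laminar hN (hMsubN B hB) (hMsubN C hC) with h | h | h
      · exact absurd (hB.2 C hC.1 h) hne
      · exact absurd (hC.2 B hB.1 h).symm hne
      · exact h
    have hGM : GoodF N M := ⟨hMsubN, hMd⟩
    have hup : ∀ B ∈ XB, ∃ C ∈ M, B ⊆ C := by
      intro B hB
      obtain ⟨C, ⟨hC1, hC2⟩, hmaxC⟩ := exists_max_block (𝔛 := XB) hB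
      exact ⟨C, ⟨hC1, hmaxC⟩, hC2⟩
    have hMne : M.Nonempty := by
      obtain ⟨g, hg⟩ := Set.nonempty_iff_ne_empty.mpr h0
      obtain ⟨B, h2, _, rfl⟩ := mem_N_block hN (huN hg)
      obtain ⟨C, hC, _⟩ := hup B ⟨h2, hg⟩
      exact ⟨C, hC⟩
    set z : Setoid (Fin m) := multi M with hz
    have hzS : z ∈ SigmaSet k m N \ {⊥} :=
      ⟨multi_mem_SigmaSet hN hGM, fun h => multi_ne_bot hN hGM hMne h⟩
    have hblz : blocksOf k z = M := blocksOf_multi hN hGM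
    have hFz : maxBelow (BSG k m) z = blockSetoid '' M := by
      rw [maxBelow_eq_image_blocksOf hN hzS, hblz]
    have hFzS : maxBelow (BSG k m) z ⊆ S := by
      rw [hFz]; rintro g ⟨B, hB, rfl⟩; exact hB.1.2
    have hFzne : (maxBelow (BSG k m) z).Nonempty := maxBelow_nonempty hN hzS
    -- the minimizer
    obtain ⟨g₀, hg₀T, hg₀min⟩ := Finset.exists_min_image
      ((Set.toFinite (maxBelow (BSG k m) z)).toFinset) u
      (by rw [Set.Finite.toFinset_nonempty]; exact hFzne)
    rw [Set.Finite.mem_toFinset] at hg₀T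
    set c : ℝ := u g₀ with hc
    have hcpos : 0 < c := lt_of_le_of_ne (hu0 g₀) (Ne.symm (hFzS hg₀T))
    have hcmin : ∀ g ∈ maxBelow (BSG k m) z, c ≤ u g := by
      intro g hg
      exact hg₀min g (Set.Finite.mem_toFinset _ |>.mpr hg)
    set u' : Setoid (Fin m) → ℝ :=
      fun g => u g - (if g ∈ maxBelow (BSG k m) z then c else 0) with hu'
    have hu'0 : ∀ v, 0 ≤ u' v := by
      intro v
      by_cases hv : v ∈ maxBelow (BSG k m) z
      · simp only [hu', hv, if_pos]
        exact sub_nonneg.mpr (hcmin v hv)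
      · simp only [hu', hv, if_neg, not_false_iff, sub_zero]
        exact hu0 v
    have hsupp' : Function.support u' ⊆ S \ {g₀} := by
      intro g hg
      have hgS : g ∈ S := by
        by_contra hgS
        apply hg
        have hgF : g ∉ maxBelow (BSG k m) z := fun h => hgS (hFzS h)
        have : u g = 0 := Function.notMem_support.mp hgS
        simp [hu', hgF, this]
      refine ⟨hgS, ?_⟩
      intro hgg
      rw [Set.mem_singleton_iff] at hgg
      subst hgg
      apply hg
      simp [hu', hg₀T, hc]
    have hcard' : (Function.support u').ncard ≤ n := by
      have hlt := Set.ncard_diff_singleton_lt_of_mem (hFzS hg₀T) (Set.toFinite S)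
      have hle := Set.ncard_le_ncard hsupp' (Set.toFinite _)
      have hSl : S.ncard ≤ n + 1 := hcard
      omega
    obtain ⟨w', hw'cone, hw'Φ, hw'car⟩ := ih u' hcard' hu'0
      ((hsupp'.trans Set.diff_subset).trans huN)
    set t : ℝ := ((maxBelow (BSG k m) z).ncard : ℝ) * c with ht
    have htpos : 0 < t := by
      have := (Set.ncard_pos (Set.toFinite _)).mpr hFzne
      positivity
    set w : Setoid (Fin m) → ℝ := fun x => w' x + (if x = z then t else 0) with hw
    have hsuppw : Function.support w ⊆ insert z (Function.support w') := by
      intro v hv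
      by_cases hvz : v = z
      · exact Set.mem_insert_iff.mpr (Or.inl hvz)
      · refine Set.mem_insert_iff.mpr (Or.inr ?_)
        rw [Function.mem_support]
        intro hv0
        apply hv
        simp [hw, hvz, hv0]
    have hle_z : ∀ x ∈ Function.support w', x ≤ z := by
      intro x hx
      have hxS : x ∈ SigmaSet k m N \ {⊥} := hw'cone.2.1 hx
      obtain ⟨hGx, _, hex⟩ := sigma_struct hN hxS
      rw [(sigma_struct hN hxS).2.2, hz]
      rw [multi_le_multi_iff hMd fun B hB => hB.1]
      intro B hB
      have hBF : blockSetoid B ∈ maxBelow (BSG k m) x := hB.2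
      have hBS : blockSetoid B ∈ S := (hsupp'.trans Set.diff_subset) (hw'car x hx hBF)
      exact hup B ⟨hB.1, hBS⟩
    have hwcone : w ∈ coneP k m N := by
      refine ⟨fun v => ?_, ?_, ?_⟩
      · have hrfl : w v = w' v + (if v = z then t else 0) := rfl
        rw [hrfl]
        by_cases hvz : v = z
        · rw [if_pos hvz]; exact add_nonneg (hw'cone.1 v) htpos.le
        · rw [if_neg hvz, add_zero]; exact hw'cone.1 v
      · intro v hv
        rcases Set.mem_insert_iff.mp (hsuppw hv) with rfl | hv'
        · exact hzS
        · exact hw'cone.2.1 hv'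
      · apply IsChain.mono hsuppw
        apply IsChain.insert hw'cone.2.2
        intro b hb _
        exact Or.inr (hle_z b hb)
    refine ⟨w, hwcone, ?_, ?_⟩
    · funext g
      have hsum : linExt (bary k m) w g = linExt (bary k m) w' g + t * bary k m z g := by
        rw [linExt_apply, linExt_apply]
        have hterm : ∀ v, w v * bary k m v g =
            w' v * bary k m v g + (if v = z then t * bary k m v g else 0) := by
          intro v
          by_cases hv : v = z <;> simp [hw, hv, add_mul]
        simp only [hterm]
        rw [Finset.sum_add_distrib,
          Finset.sum_ite_eq' Finset.univ z (fun v => t * bary k m v g)]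
        simp
      rw [hsum, hw'Φ]
      by_cases hg : g ∈ maxBelow (BSG k m) z
      · rw [bary_eq_inv hg]
        have hne0 := ncard_ne_zero_of_nonempty hFzne
        have : t * ((maxBelow (BSG k m) z).ncard : ℝ)⁻¹ = c := by
          rw [ht]
          field_simp
        rw [this]
        simp [hu', hg]
      · rw [bary_eq_zero hg, mul_zero, add_zero]
        simp [hu', hg]
    · intro x hx
      rcases Set.mem_insert_iff.mp (hsuppw hx) with rfl | hx'
      · exact hFzS
      · exact (hw'car x hx').trans (hsupp'.trans Set.diff_subset)

end Surj

section Compact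

variable {V : Type*} [Fintype V]

lemma geomF_eq_biUnion (F : Set (Set V)) (hdc : ∀ s ∈ F, ∀ t ⊆ s, t.Nonempty → t ∈ F) :
    geomF F = ⋃ s ∈ F,
      {w : V → ℝ | (∀ v, 0 ≤ w v) ∧ (∀ v, v ∉ s → w v = 0) ∧ ∑ v, w v = 1} := by
  ext w
  constructor
  · rintro ⟨hpos, hfin, hsum, hmem⟩
    refine Set.mem_biUnion hmem ⟨hpos, ?_, ?_⟩
    · intro v hv; exact Function.notMem_support.mp hv
    · rw [← finsum_eq_sum_of_fintype]; exact hsum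
  · intro hw
    obtain ⟨s, hs, hpos, hzero, hsum⟩ := Set.mem_iUnion₂.mp hw
    have hsub : Function.support w ⊆ s := by
      intro v hv
      by_contra hvs
      exact hv (hzero v hvs)
    have hne : (Function.support w).Nonempty := by
      rw [Set.nonempty_iff_ne_empty]
      intro he
      rw [Function.support_eq_empty_iff] at he
      rw [he] at hsum
      simpa using hsum
    exact ⟨hpos, Set.toFinite _, by rw [finsum_eq_sum_of_fintype]; exact hsum,
      hdc s hs _ hsub hne⟩

lemma cell_compact (s : Set V) :
    IsCompact {w : V → ℝ | (∀ v, 0 ≤ w v) ∧ (∀ v, v ∉ s → w v = 0) ∧ ∑ v, w v = 1} := by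
  apply IsCompact.of_isClosed_subset (isCompact_univ_pi fun _ : V => isCompact_Icc (a := (0:ℝ)) (b := 1))
  · have h1 : IsClosed {w : V → ℝ | ∀ v, 0 ≤ w v} := by
      have : {w : V → ℝ | ∀ v, 0 ≤ w v} = ⋂ v, {w : V → ℝ | 0 ≤ w v} := by
        ext w; simp
      rw [this]
      exact isClosed_iInter fun v => isClosed_le continuous_const (continuous_apply v)
    have h2 : IsClosed {w : V → ℝ | ∀ v, v ∉ s → w v = 0} := by
      have : {w : V → ℝ | ∀ v, v ∉ s → w v = 0} =
          ⋂ v ∈ {v | v ∉ s}, {w : V → ℝ | w v = 0} := by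
        ext w; simp
      rw [this]
      exact isClosed_biInter fun v _ => isClosed_eq (continuous_apply v) continuous_const
    have h3 : IsClosed {w : V → ℝ | ∑ v, w v = 1} :=
      isClosed_eq (continuous_finset_sum _ fun v _ => continuous_apply v) continuous_const
    have heq : {w : V → ℝ | (∀ v, 0 ≤ w v) ∧ (∀ v, v ∉ s → w v = 0) ∧ ∑ v, w v = 1} =
        {w : V → ℝ | ∀ v, 0 ≤ w v} ∩ ({w : V → ℝ | ∀ v, v ∉ s → w v = 0} ∩
          {w : V → ℝ | ∑ v, w v = 1}) := by
      ext w; simp [Set.mem_setOf_eq, Set.mem_inter_iff, and_assoc]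
    rw [heq]
    exact h1.inter (h2.inter h3)
  · rintro w ⟨hpos, _, hsum⟩
    rw [Set.mem_univ_pi]
    intro v
    refine ⟨hpos v, ?_⟩
    rw [← hsum]
    exact Finset.single_le_sum (fun i _ => hpos i) (Finset.mem_univ v)

lemma geomF_compact (F : Set (Set V)) (hdc : ∀ s ∈ F, ∀ t ⊆ s, t.Nonempty → t ∈ F) :
    IsCompact (geomF F) := by
  rw [geomF_eq_biUnion F hdc]
  exact Set.Finite.isCompact_biUnion (Set.toFinite F) fun s _ => cell_compact s

end Compact

/-- For a face `N` of the complex of k-trees, the map sending a chain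
`ω` in `Σ(N) \ {⊥}` to the union of the factor sets of its members is the carrier map of
a subdivision of the full simplex on `N` by the order complex of `Σ(N) \ {⊥}`; in
particular each such union of factor sets is a (nonempty) subset of `N`. -/
theorem stmt16 (k m : ℕ) (hk : 1 ≤ k) (hm : m ≡ 1 [MOD k])
    (N : Set (Setoid (Fin m))) (hN : memN k m N) (hne : N.Nonempty) :
    (∀ ω ∈ {S : Set (Setoid (Fin m)) |
        S.Nonempty ∧ S.Finite ∧ S ⊆ SigmaSet k m N \ {⊥} ∧ IsChain (· ≤ ·) S},
      (⋃ x ∈ ω, maxBelow (BSG k m) x) ∈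
        {S : Set (Setoid (Fin m)) | S.Nonempty ∧ S.Finite ∧ S ⊆ N}) ∧
    ∃ f0 : Setoid (Fin m) → Setoid (Fin m) → ℝ,
      IsSubdivOn
        {S : Set (Setoid (Fin m)) |
          S.Nonempty ∧ S.Finite ∧ S ⊆ SigmaSet k m N \ {⊥} ∧ IsChain (· ≤ ·) S}
        {S : Set (Setoid (Fin m)) | S.Nonempty ∧ S.Finite ∧ S ⊆ N}
        (fun ω => ⋃ x ∈ ω, maxBelow (BSG k m) x) f0 := by
  classical
  set P : Set (Set (Setoid (Fin m))) := {S : Set (Setoid (Fin m)) |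
    S.Nonempty ∧ S.Finite ∧ S ⊆ SigmaSet k m N \ {⊥} ∧ IsChain (· ≤ ·) S} with hP
  set Q : Set (Set (Setoid (Fin m))) := {S : Set (Setoid (Fin m)) |
    S.Nonempty ∧ S.Finite ∧ S ⊆ N} with hQ
  have hpart1 : ∀ ω ∈ P, (⋃ x ∈ ω, maxBelow (BSG k m) x) ∈ Q := by
    rintro ω ⟨hne', _, hsub, _⟩
    refine ⟨?_, Set.toFinite _, ?_⟩
    · obtain ⟨x, hx⟩ := hne'
      obtain ⟨g, hg⟩ := maxBelow_nonempty hN (hsub hx)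
      exact ⟨g, Set.mem_biUnion hx hg⟩
    · exact Set.iUnion₂_subset fun x hx => maxBelow_subset_N hN (hsub hx)
  refine ⟨hpart1, bary k m, hpart1, ?_, ?_, ?_⟩
  · -- monotonicity of the carrier map
    intro p _ p' _ hss
    exact Set.biUnion_subset_biUnion_left hss
  · -- vertices land in the closed cell
    intro p hp v hv
    have hvS : v ∈ SigmaSet k m N \ {⊥} := hp.2.2.1 hv
    have hFne := maxBelow_nonempty hN hvS
    refine ⟨fun g => bary_nonneg v g, Set.toFinite _, ?_, ?_⟩
    · rw [finsum_eq_sum_of_fintype]; exact sum_bary hFne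
    · rw [support_bary hFne]
      exact ⟨fun g hg => Set.mem_biUnion hv hg, hFne⟩
  · -- the homeomorphism
    have hPdc : ∀ s ∈ P, ∀ t ⊆ s, t.Nonempty → t ∈ P := by
      rintro s ⟨_, _, hsub, hchain⟩ t hts htne
      exact ⟨htne, Set.toFinite t, hts.trans hsub, hchain.mono hts⟩
    have hPc : IsCompact (geomF P) := geomF_compact P hPdc
    haveI : CompactSpace (geomF P) := isCompact_iff_compactSpace.mp hPc
    have hPmem : ∀ w : Setoid (Fin m) → ℝ,
        w ∈ geomF P ↔ (w ∈ coneP k m N ∧ ∑ v, w v = 1) := by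
      intro w
      constructor
      · rintro ⟨hpos, _, hsum, ⟨_, _, hsub, hchain⟩⟩
        exact ⟨⟨hpos, hsub, hchain⟩, by rw [← finsum_eq_sum_of_fintype]; exact hsum⟩
      · rintro ⟨⟨hpos, hsub, hchain⟩, hsum⟩
        refine ⟨hpos, Set.toFinite _,
          by rw [finsum_eq_sum_of_fintype]; exact hsum, ?_, Set.toFinite _, hsub, hchain⟩
        rw [Set.nonempty_iff_ne_empty]
        intro he
        rw [Function.support_eq_empty_iff] at he
        rw [he] at hsum
        simpa using hsum
    have hQmem : ∀ u : Setoid (Fin m) → ℝ,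
        u ∈ geomF Q ↔ ((∀ v, 0 ≤ u v) ∧ Function.support u ⊆ N ∧ ∑ v, u v = 1) := by
      intro u
      constructor
      · rintro ⟨hpos, _, hsum, ⟨_, _, hsub⟩⟩
        exact ⟨hpos, hsub, by rw [← finsum_eq_sum_of_fintype]; exact hsum⟩
      · rintro ⟨hpos, hsub, hsum⟩
        refine ⟨hpos, Set.toFinite _,
          by rw [finsum_eq_sum_of_fintype]; exact hsum, ?_, Set.toFinite _, hsub⟩
        rw [Set.nonempty_iff_ne_empty]
        intro he
        rw [Function.support_eq_empty_iff] at he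
        rw [he] at hsum
        simpa using hsum
    have toQ : ∀ w, w ∈ geomF P → linExt (bary k m) w ∈ geomF Q := by
      intro w hw
      obtain ⟨hwc, hwsum⟩ := (hPmem w).mp hw
      apply (hQmem _).mpr
      refine ⟨linExt_nonneg hwc.1, ?_, ?_⟩
      · rw [support_linExt hN hwc]
        exact Set.iUnion₂_subset fun x hx => maxBelow_subset_N hN (hwc.2.1 hx)
      · rw [sum_linExt hN hwc]; exact hwsum
    have hbij : Function.Bijective (fun w : geomF P =>
        (⟨linExt (bary k m) w.1, toQ w.1 w.2⟩ : geomF Q)) := by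
      constructor
      · intro a b hab
        apply Subtype.ext
        apply inj_aux hN ((Function.support a.1 ∪ Function.support b.1).ncard) a.1 b.1
          ((hPmem a.1).mp a.2).1 ((hPmem b.1).mp b.2).1 le_rfl
        exact congrArg Subtype.val hab
      · rintro ⟨u, hu⟩
        obtain ⟨hupos, husub, husum⟩ := (hQmem u).mp hu
        obtain ⟨w, hwc, hwΦ, _⟩ := surj_aux hN (Function.support u).ncard u le_rfl
          hupos husub
        have hwsum : ∑ v, w v = 1 := by
          rw [← sum_linExt hN hwc, hwΦ]; exact husum
        exact ⟨⟨w, (hPmem w).mpr ⟨hwc, hwsum⟩⟩, Subtype.ext hwΦ⟩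
    set E : geomF P ≃ geomF Q := Equiv.ofBijective _ hbij with hE
    have hcontE : Continuous E := by
      have hc : Continuous (fun w : Setoid (Fin m) → ℝ => linExt (bary k m) w) := by
        apply continuous_pi
        intro g
        have heq : (fun w : Setoid (Fin m) → ℝ => linExt (bary k m) w g) =
            fun w => ∑ v, w v * bary k m v g := funext fun w => linExt_apply _ _ _
        rw [heq]
        exact continuous_finset_sum _ fun v _ => (continuous_apply v).mul continuous_const
      exact Continuous.subtype_mk (hc.comp continuous_subtype_val) _
    refine ⟨Continuous.homeoOfEquivCompactToT2 (f := E) hcontE, fun w => rfl⟩
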